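/- There exists a single computable predictor that learns to predict every primitive recursive binary sequence: there is a computable p : List Bool → Bool such that for every ω : ℕ → Bool with ω primitive recursive (Primrec ω), p learns to predict ω. -/

import Mathlib

/-- The length-`n` prefix `[ω 0, …, ω (n−1)]` of a binary sequence `ω`. -/
def prefixList (ω : ℕ → Bool) (n : ℕ) : List Bool := (List.range n).map ω

/-- A predictor `p` learns to predict the sequence `ω` if from some point on it
always predicts the next symbol correctly. -/
def LearnsToPredict (p : List Bool → Bool) (ω : ℕ → Bool) : Prop :=
  ∃ m : ℕ, ∀ n ≥ m, p (prefixList ω n) = ω n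

namespace S7

def evalT (c : ℕ) : ℕ → ℕ :=
  if c = 0 then fun _ => 0
  else if c = 1 then fun n => n + 1
  else if c = 2 then fun n => n.unpair.1
  else if c = 3 then fun n => n.unpair.2
  else
    let k := c - 4
    let p := k / 4
    if k % 4 = 0 then fun n => Nat.pair (evalT p.unpair.1 n) (evalT p.unpair.2 n)
    else if k % 4 = 1 then fun n => evalT p.unpair.1 (evalT p.unpair.2 n)
    else if k % 4 = 2 then fun n =>
      (n.unpair.2).rec (evalT p.unpair.1 n.unpair.1)
        (fun y ih => evalT p.unpair.2 (Nat.pair n.unpair.1 (Nat.pair y ih)))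
    else fun _ => 0
termination_by c
decreasing_by
  all_goals
    first
    | (have h1 := Nat.unpair_left_le ((c-4)/4); have h2 := Nat.div_le_self (c-4) 4; omega)
    | (have h1 := Nat.unpair_right_le ((c-4)/4); have h2 := Nat.div_le_self (c-4) 4; omega)

theorem evalT_zero (n : ℕ) : evalT 0 n = 0 := by rw [evalT]; norm_num
theorem evalT_one (n : ℕ) : evalT 1 n = n + 1 := by rw [evalT]; norm_num
theorem evalT_two (n : ℕ) : evalT 2 n = n.unpair.1 := by rw [evalT]; norm_num
theorem evalT_three (n : ℕ) : evalT 3 n = n.unpair.2 := by rw [evalT]; norm_num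

theorem evalT_pair (a b n : ℕ) :
    evalT (4 * Nat.pair a b + 4) n = Nat.pair (evalT a n) (evalT b n) := by
  rw [evalT]
  have h : 4 * Nat.pair a b + 4 - 4 = 4 * Nat.pair a b := by omega
  simp [h, Nat.mul_div_cancel_left, Nat.mul_mod_right]

theorem evalT_comp (a b n : ℕ) :
    evalT (4 * Nat.pair a b + 5) n = evalT a (evalT b n) := by
  rw [evalT]
  have h : 4 * Nat.pair a b + 5 - 4 = 4 * Nat.pair a b + 1 := by omega
  simp [h, Nat.mul_add_mod, Nat.mul_add_div]

theorem evalT_prec (a b n : ℕ) :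
    evalT (4 * Nat.pair a b + 6) n =
      (n.unpair.2).rec (evalT a n.unpair.1)
        (fun y ih => evalT b (Nat.pair n.unpair.1 (Nat.pair y ih))) := by
  rw [evalT]
  have h : 4 * Nat.pair a b + 6 - 4 = 4 * Nat.pair a b + 2 := by omega
  simp [h, Nat.mul_add_mod, Nat.mul_add_div]

theorem evalT_junk (c n : ℕ) (h4 : 4 ≤ c) (h : (c-4) % 4 = 3) : evalT c n = 0 := by
  rw [evalT]
  have h0 : c ≠ 0 := by omega
  have h1 : c ≠ 1 := by omega
  have h2 : c ≠ 2 := by omega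
  have h3 : c ≠ 3 := by omega
  simp [h0, h1, h2, h3, h]

theorem exists_code {f : ℕ → ℕ} (hf : Nat.Primrec f) : ∃ e, ∀ n, evalT e n = f n := by
  induction hf with
  | zero => exact ⟨0, evalT_zero⟩
  | succ => exact ⟨1, evalT_one⟩
  | left => exact ⟨2, evalT_two⟩
  | right => exact ⟨3, evalT_three⟩
  | pair hf hg ihf ihg =>
    obtain ⟨e1, h1⟩ := ihf; obtain ⟨e2, h2⟩ := ihg
    exact ⟨4 * Nat.pair e1 e2 + 4, fun n => by rw [evalT_pair, h1, h2]⟩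
  | comp hf hg ihf ihg =>
    obtain ⟨e1, h1⟩ := ihf; obtain ⟨e2, h2⟩ := ihg
    exact ⟨4 * Nat.pair e1 e2 + 5, fun n => by rw [evalT_comp, h1, h2]⟩
  | prec hf hg ihf ihg =>
    obtain ⟨e1, h1⟩ := ihf; obtain ⟨e2, h2⟩ := ihg
    refine ⟨4 * Nat.pair e1 e2 + 6, fun n => ?_⟩
    rw [evalT_prec]
    simp only [Nat.unpaired, h1]
    induction n.unpair.2 with
    | zero => rfl
    | succ y ih => simp [ih, h2]


def stEval (c n K : ℕ) : ℕ := Nat.pair 0 (Nat.pair (Nat.pair c n) K)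
def stRet (v K : ℕ) : ℕ := Nat.pair 1 (Nat.pair v K)
def frComp (cf : ℕ) : ℕ := Nat.pair 0 cf
def frPairSnd (c2 n : ℕ) : ℕ := Nat.pair 1 (Nat.pair c2 n)
def frPairFin (a : ℕ) : ℕ := Nat.pair 2 a
def frPrec (c2 a j m : ℕ) : ℕ := Nat.pair 3 (Nat.pair c2 (Nat.pair a (Nat.pair j m)))
def cns (fr K : ℕ) : ℕ := Nat.pair fr K + 1

def pC (s : ℕ) : ℕ := s.unpair.2.unpair.1.unpair.1
def pN (s : ℕ) : ℕ := s.unpair.2.unpair.1.unpair.2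
def pK (s : ℕ) : ℕ := s.unpair.2.unpair.2
def pC1 (s : ℕ) : ℕ := ((pC s - 4)/4).unpair.1
def pC2 (s : ℕ) : ℕ := ((pC s - 4)/4).unpair.2
def pV (s : ℕ) : ℕ := s.unpair.2.unpair.1
def pFr (s : ℕ) : ℕ := (pK s - 1).unpair.1
def pK' (s : ℕ) : ℕ := (pK s - 1).unpair.2
def pTag (s : ℕ) : ℕ := (pFr s).unpair.1
def pD (s : ℕ) : ℕ := (pFr s).unpair.2

def next (s : ℕ) : ℕ :=
  if s.unpair.1 = 0 then
    if pC s = 0 then stRet 0 (pK s)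
    else if pC s = 1 then stRet (pN s + 1) (pK s)
    else if pC s = 2 then stRet (pN s).unpair.1 (pK s)
    else if pC s = 3 then stRet (pN s).unpair.2 (pK s)
    else if (pC s - 4) % 4 = 0 then stEval (pC1 s) (pN s) (cns (frPairSnd (pC2 s) (pN s)) (pK s))
    else if (pC s - 4) % 4 = 1 then stEval (pC2 s) (pN s) (cns (frComp (pC1 s)) (pK s))
    else if (pC s - 4) % 4 = 2 then
      stEval (pC1 s) (pN s).unpair.1
        (cns (frPrec (pC2 s) (pN s).unpair.1 0 (pN s).unpair.2) (pK s))
    else stRet 0 (pK s)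
  else if pK s = 0 then 0
  else if pTag s = 0 then stEval (pD s) (pV s) (pK' s)
  else if pTag s = 1 then
    stEval (pD s).unpair.1 (pD s).unpair.2 (cns (frPairFin (pV s)) (pK' s))
  else if pTag s = 2 then stRet (Nat.pair (pD s) (pV s)) (pK' s)
  else if (pD s).unpair.2.unpair.2.unpair.1 = (pD s).unpair.2.unpair.2.unpair.2 then
    stRet (pV s) (pK' s)
  else
    stEval (pD s).unpair.1
      (Nat.pair (pD s).unpair.2.unpair.1
        (Nat.pair (pD s).unpair.2.unpair.2.unpair.1 (pV s)))
      (cns (frPrec (pD s).unpair.1 (pD s).unpair.2.unpair.1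
        ((pD s).unpair.2.unpair.2.unpair.1 + 1) (pD s).unpair.2.unpair.2.unpair.2) (pK' s))

def step (s : ℕ) : ℕ ⊕ ℕ :=
  if s.unpair.1 ≠ 0 ∧ s.unpair.2.unpair.2 = 0 then Sum.inl s.unpair.2.unpair.1
  else Sum.inr (next s)

section Comp
open Primrec

private lemma pr_u1 {f : ℕ → ℕ} (hf : Primrec f) : Primrec fun s => (f s).unpair.1 :=
  fst.comp (Primrec.unpair.comp hf)
private lemma pr_u2 {f : ℕ → ℕ} (hf : Primrec f) : Primrec fun s => (f s).unpair.2 :=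
  snd.comp (Primrec.unpair.comp hf)
private lemma pr_pair {f g : ℕ → ℕ} (hf : Primrec f) (hg : Primrec g) :
    Primrec fun s => Nat.pair (f s) (g s) := Primrec₂.natPair.comp hf hg
private lemma pr_succ {f : ℕ → ℕ} (hf : Primrec f) : Primrec fun s => f s + 1 :=
  Primrec.succ.comp hf
private lemma pr_ifeq {f g h k : ℕ → ℕ} (hf : Primrec f) (hg : Primrec g) (hh : Primrec h)
    (hk : Primrec k) : Primrec fun s => if f s = g s then h s else k s :=
  Primrec.ite (Primrec.eq.comp hf hg) hh hk

lemma pC_pr : Primrec pC := pr_u1 (pr_u1 (pr_u2 .id))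
lemma pN_pr : Primrec pN := pr_u2 (pr_u1 (pr_u2 .id))
lemma pK_pr : Primrec pK := pr_u2 (pr_u2 .id)
lemma q_pr : Primrec (fun s => (pC s - 4)/4) :=
  nat_div.comp (nat_sub.comp pC_pr (const 4)) (const 4)
lemma mod_pr : Primrec (fun s => (pC s - 4) % 4) :=
  nat_mod.comp (nat_sub.comp pC_pr (const 4)) (const 4)
lemma pC1_pr : Primrec pC1 := pr_u1 q_pr
lemma pC2_pr : Primrec pC2 := pr_u2 q_pr
lemma pV_pr : Primrec pV := pr_u1 (pr_u2 .id)
lemma pFr_pr : Primrec pFr := pr_u1 (nat_sub.comp pK_pr (const 1))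
lemma pK'_pr : Primrec pK' := pr_u2 (nat_sub.comp pK_pr (const 1))
lemma pTag_pr : Primrec pTag := pr_u1 pFr_pr
lemma pD_pr : Primrec pD := pr_u2 pFr_pr


private lemma stRet_pr {f g : ℕ → ℕ} (hf : Primrec f) (hg : Primrec g) :
    Primrec fun s => stRet (f s) (g s) := pr_pair (const 1) (pr_pair hf hg)
private lemma stEval_pr {f g h : ℕ → ℕ} (hf : Primrec f) (hg : Primrec g) (hh : Primrec h) :
    Primrec fun s => stEval (f s) (g s) (h s) := pr_pair (const 0) (pr_pair (pr_pair hf hg) hh)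
private lemma cns_pr {f g : ℕ → ℕ} (hf : Primrec f) (hg : Primrec g) :
    Primrec fun s => cns (f s) (g s) := pr_succ (pr_pair hf hg)
private lemma frComp_pr {f : ℕ → ℕ} (hf : Primrec f) :
    Primrec fun s => frComp (f s) := pr_pair (const 0) hf
private lemma frPairSnd_pr {f g : ℕ → ℕ} (hf : Primrec f) (hg : Primrec g) :
    Primrec fun s => frPairSnd (f s) (g s) := pr_pair (const 1) (pr_pair hf hg)
private lemma frPairFin_pr {f : ℕ → ℕ} (hf : Primrec f) :
    Primrec fun s => frPairFin (f s) := pr_pair (const 2) hf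
private lemma frPrec_pr {f g h k : ℕ → ℕ} (hf : Primrec f) (hg : Primrec g) (hh : Primrec h)
    (hk : Primrec k) : Primrec fun s => frPrec (f s) (g s) (h s) (k s) :=
  pr_pair (const 3) (pr_pair hf (pr_pair hg (pr_pair hh hk)))

lemma next_pr : Primrec next := by
  unfold next
  exact pr_ifeq (pr_u1 .id) (const 0)
    (pr_ifeq pC_pr (const 0) (stRet_pr (const 0) pK_pr) <|
     pr_ifeq pC_pr (const 1) (stRet_pr (pr_succ pN_pr) pK_pr) <|
     pr_ifeq pC_pr (const 2) (stRet_pr (pr_u1 pN_pr) pK_pr) <|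
     pr_ifeq pC_pr (const 3) (stRet_pr (pr_u2 pN_pr) pK_pr) <|
     pr_ifeq mod_pr (const 0)
       (stEval_pr pC1_pr pN_pr (cns_pr (frPairSnd_pr pC2_pr pN_pr) pK_pr)) <|
     pr_ifeq mod_pr (const 1)
       (stEval_pr pC2_pr pN_pr (cns_pr (frComp_pr pC1_pr) pK_pr)) <|
     pr_ifeq mod_pr (const 2)
       (stEval_pr pC1_pr (pr_u1 pN_pr)
         (cns_pr (frPrec_pr pC2_pr (pr_u1 pN_pr) (const 0) (pr_u2 pN_pr)) pK_pr))
       (stRet_pr (const 0) pK_pr))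
    (pr_ifeq pK_pr (const 0) (const 0) <|
     pr_ifeq pTag_pr (const 0) (stEval_pr pD_pr pV_pr pK'_pr) <|
     pr_ifeq pTag_pr (const 1)
       (stEval_pr (pr_u1 pD_pr) (pr_u2 pD_pr) (cns_pr (frPairFin_pr pV_pr) pK'_pr)) <|
     pr_ifeq pTag_pr (const 2) (stRet_pr (pr_pair pD_pr pV_pr) pK'_pr) <|
     pr_ifeq (pr_u1 (pr_u2 (pr_u2 pD_pr))) (pr_u2 (pr_u2 (pr_u2 pD_pr)))
       (stRet_pr pV_pr pK'_pr)
       (stEval_pr (pr_u1 pD_pr)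
         (pr_pair (pr_u1 (pr_u2 pD_pr))
           (pr_pair (pr_u1 (pr_u2 (pr_u2 pD_pr))) pV_pr))
         (cns_pr (frPrec_pr (pr_u1 pD_pr) (pr_u1 (pr_u2 pD_pr))
           (pr_succ (pr_u1 (pr_u2 (pr_u2 pD_pr)))) (pr_u2 (pr_u2 (pr_u2 pD_pr)))) pK'_pr)))

lemma step_pr : Primrec step := by
  unfold step
  exact Primrec.ite
    ((PrimrecPred.not (Primrec.eq.comp (pr_u1 .id) (const 0))).and
      (Primrec.eq.comp (pr_u2 (pr_u2 .id)) (const 0)))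
    (sumInl.comp (pr_u1 (pr_u2 .id)))
    (sumInr.comp next_pr)

end Comp

lemma cns_ne_zero (f K : ℕ) : cns f K ≠ 0 := by simp [cns]

lemma step_eval (c n K : ℕ) : step (stEval c n K) = Sum.inr (next (stEval c n K)) := by
  simp [step, stEval]

lemma next_eval_zero (n K : ℕ) : next (stEval 0 n K) = stRet 0 K := by
  simp [next, stEval, pC, pK]
lemma next_eval_one (n K : ℕ) : next (stEval 1 n K) = stRet (n+1) K := by
  simp [next, stEval, pC, pK, pN]
lemma next_eval_two (n K : ℕ) : next (stEval 2 n K) = stRet n.unpair.1 K := by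
  simp [next, stEval, pC, pK, pN]
lemma next_eval_three (n K : ℕ) : next (stEval 3 n K) = stRet n.unpair.2 K := by
  simp [next, stEval, pC, pK, pN]
lemma next_eval_pair (a b n K : ℕ) :
    next (stEval (4 * Nat.pair a b + 4) n K) = stEval a n (cns (frPairSnd b n) K) := by
  have h1 : 4 * Nat.pair a b + 4 - 4 = 4 * Nat.pair a b := by omega
  simp [next, stEval, pC, pK, pN, pC1, pC2, h1, Nat.mul_mod_right, Nat.mul_div_cancel_left]
lemma next_eval_comp (a b n K : ℕ) :
    next (stEval (4 * Nat.pair a b + 5) n K) = stEval b n (cns (frComp a) K) := by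
  have h1 : 4 * Nat.pair a b + 5 - 4 = 4 * Nat.pair a b + 1 := by omega
  simp [next, stEval, pC, pK, pN, pC1, pC2, h1, Nat.mul_add_mod, Nat.mul_add_div]
lemma next_eval_prec (a b n K : ℕ) :
    next (stEval (4 * Nat.pair a b + 6) n K) =
      stEval a n.unpair.1 (cns (frPrec b n.unpair.1 0 n.unpair.2) K) := by
  have h1 : 4 * Nat.pair a b + 6 - 4 = 4 * Nat.pair a b + 2 := by omega
  simp [next, stEval, pC, pK, pN, pC1, pC2, h1, Nat.mul_add_mod, Nat.mul_add_div]
lemma next_eval_junk (c n K : ℕ) (h4 : 4 ≤ c) (h : (c-4) % 4 = 3) :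
    next (stEval c n K) = stRet 0 K := by
  have h0 : c ≠ 0 := by omega
  have h1 : c ≠ 1 := by omega
  have h2 : c ≠ 2 := by omega
  have h3 : c ≠ 3 := by omega
  simp [next, stEval, pC, pK, pN, h, h0, h1, h2, h3]

lemma step_ret_nil (v : ℕ) : step (stRet v 0) = Sum.inl v := by
  simp [step, stRet]
lemma step_ret_cons (v f K : ℕ) :
    step (stRet v (cns f K)) = Sum.inr (next (stRet v (cns f K))) := by
  simp [step, stRet, cns]

lemma next_ret_comp (v cf K : ℕ) :
    next (stRet v (cns (frComp cf) K)) = stEval cf v K := by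
  simp [next, stRet, cns, frComp, pC, pK, pV, pFr, pK', pTag, pD]
lemma next_ret_pairSnd (a c2 n K : ℕ) :
    next (stRet a (cns (frPairSnd c2 n) K)) = stEval c2 n (cns (frPairFin a) K) := by
  simp [next, stRet, cns, frPairSnd, frPairFin, pC, pK, pV, pFr, pK', pTag, pD]
lemma next_ret_pairFin (b a K : ℕ) :
    next (stRet b (cns (frPairFin a) K)) = stRet (Nat.pair a b) K := by
  simp [next, stRet, cns, frPairFin, pC, pK, pV, pFr, pK', pTag, pD]
lemma next_ret_prec_done (x c2 a m K : ℕ) :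
    next (stRet x (cns (frPrec c2 a m m) K)) = stRet x K := by
  simp [next, stRet, cns, frPrec, pC, pK, pV, pFr, pK', pTag, pD]
lemma next_ret_prec_go (x c2 a j m K : ℕ) (h : j ≠ m) :
    next (stRet x (cns (frPrec c2 a j m) K)) =
      stEval c2 (Nat.pair a (Nat.pair j x)) (cns (frPrec c2 a (j+1) m) K) := by
  simp [next, stRet, cns, frPrec, pC, pK, pV, pFr, pK', pTag, pD, h]

def mstep : ℕ →. ℕ ⊕ ℕ := fun s => Part.some (step s)
def MF : ℕ →. ℕ := PFun.fix mstep

lemma MF_fwd {s s' : ℕ} (h : step s = Sum.inr s') : MF s = MF s' :=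
  PFun.fix_fwd_eq (by simp [mstep, h])

lemma MF_ret_nil (v : ℕ) : v ∈ MF (stRet v 0) :=
  PFun.fix_stop (by simp [mstep, step_ret_nil])

/-- iterated prec-loop semantics -/
def contF (c2 a : ℕ) : ℕ → ℕ → ℕ → ℕ
  | 0, _, x => x
  | d+1, j, x => contF c2 a d (j+1) (evalT c2 (Nat.pair a (Nat.pair j x)))

lemma contF_rec (c2 a base : ℕ) :
    ∀ d j, contF c2 a d j
        (Nat.rec base (fun y ih => evalT c2 (Nat.pair a (Nat.pair y ih))) j) =
      Nat.rec (motive := fun _ => ℕ) base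
        (fun y ih => evalT c2 (Nat.pair a (Nat.pair y ih))) (j + d) := by
  intro d
  induction d with
  | zero => intro j; simp [contF]
  | succ d ih =>
    intro j
    have h1 := ih (j+1)
    have h2 : j + 1 + d = j + (d + 1) := by omega
    rw [h2] at h1
    simpa only [contF] using h1

theorem eval_sound : ∀ c n K r, r ∈ MF (stRet (evalT c n) K) → r ∈ MF (stEval c n K) := by
  intro c
  induction c using Nat.strong_induction_on with
  | _ c IH =>
    intro n K r h
    rcases Nat.lt_or_ge c 4 with hc | hc
    · interval_cases c
      · rw [MF_fwd (step_eval ..), next_eval_zero]; rwa [evalT_zero] at h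
      · rw [MF_fwd (step_eval ..), next_eval_one]; rwa [evalT_one] at h
      · rw [MF_fwd (step_eval ..), next_eval_two]; rwa [evalT_two] at h
      · rw [MF_fwd (step_eval ..), next_eval_three]; rwa [evalT_three] at h
    · -- c ≥ 4
      obtain ⟨a, b, hab⟩ : ∃ a b, Nat.pair a b = (c-4)/4 := ⟨_, _, Nat.pair_unpair _⟩
      have ha4 : a < c := by
        have h1 := Nat.left_le_pair a b; have h2 := Nat.div_le_self (c-4) 4; omega
      have hb4 : b < c := by
        have h1 := Nat.right_le_pair a b; have h2 := Nat.div_le_self (c-4) 4; omega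
      have hm4 : (c - 4) % 4 < 4 := Nat.mod_lt _ (by norm_num)
      interval_cases hm : ((c - 4) % 4)
      · -- pair
        have hceq : c = 4 * Nat.pair a b + 4 := by
          rw [hab]; omega
        rw [hceq]; rw [hceq] at h
        rw [MF_fwd (step_eval ..), next_eval_pair]
        apply IH a ha4
        rw [MF_fwd (step_ret_cons ..), next_ret_pairSnd]
        apply IH b hb4
        rw [MF_fwd (step_ret_cons ..), next_ret_pairFin]
        rwa [evalT_pair] at h
      · -- comp
        have hceq : c = 4 * Nat.pair a b + 5 := by rw [hab]; omega
        rw [hceq]; rw [hceq] at h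
        rw [MF_fwd (step_eval ..), next_eval_comp]
        apply IH b hb4
        rw [MF_fwd (step_ret_cons ..), next_ret_comp]
        apply IH a ha4
        rwa [evalT_comp] at h
      · -- prec
        have hceq : c = 4 * Nat.pair a b + 6 := by rw [hab]; omega
        rw [hceq]; rw [hceq] at h
        rw [MF_fwd (step_eval ..), next_eval_prec]
        apply IH a ha4
        -- now: r ∈ MF (stRet (evalT a n.unpair.1) (cns (frPrec b n.unpair.1 0 n.unpair.2) K))
        have loop : ∀ d j x, r ∈ MF (stRet (contF b n.unpair.1 d j x) K) →
            r ∈ MF (stRet x (cns (frPrec b n.unpair.1 j (j + d)) K)) := by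
          intro d
          induction d with
          | zero =>
            intro j x hx
            rw [MF_fwd (step_ret_cons ..)]
            simp only [Nat.add_zero]
            rw [next_ret_prec_done]
            simpa only [contF] using hx
          | succ d ihd =>
            intro j x hx
            rw [MF_fwd (step_ret_cons ..), next_ret_prec_go _ _ _ _ _ _ (by omega)]
            apply IH b hb4
            have := ihd (j+1) (evalT b (Nat.pair n.unpair.1 (Nat.pair j x)))
              (by simpa only [contF] using hx)
            simpa only [Nat.add_succ, Nat.succ_add] using this
        have h0 : (0 : ℕ) + n.unpair.2 = n.unpair.2 := by omega
        have := loop n.unpair.2 0 (evalT a n.unpair.1) ?_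
        · simpa [h0] using this
        · rw [evalT_prec] at h
          have hcr := contF_rec b n.unpair.1 (evalT a n.unpair.1) n.unpair.2 0
          simp only [Nat.zero_add] at hcr
          rw [← hcr] at h
          simpa using h
      · -- junk
        rw [MF_fwd (step_eval ..), next_eval_junk _ _ _ hc hm]
        rwa [evalT_junk _ _ hc hm] at h

theorem evalT_mem_MF (c n : ℕ) : evalT c n ∈ MF (stEval c n 0) :=
  eval_sound c n 0 _ (MF_ret_nil _)






lemma mstep_partrec : Partrec mstep := step_pr.to_comp

theorem evalT_computable : Computable₂ evalT := by
  have hfix : Partrec MF := Partrec.fix mstep_partrec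
  have harg : Computable fun p : ℕ × ℕ => stEval p.1 p.2 0 := by
    unfold stEval
    exact (Primrec₂.natPair.comp (Primrec.const 0)
      (Primrec₂.natPair.comp (Primrec₂.natPair.comp Primrec.fst Primrec.snd)
        (Primrec.const 0))).to_comp
  exact (hfix.comp harg).of_eq_tot fun p => evalT_mem_MF p.1 p.2

def bitv (b : Bool) : ℕ := cond b 1 0

def chkN (e : ℕ) (l : List Bool) : ℕ → Bool
  | 0 => true
  | n+1 => cond (chkN e l n) (decide (evalT e n = bitv (l.getD n false))) false

def chk (e : ℕ) (l : List Bool) : Bool := chkN e l l.length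

def selAux (l : List Bool) : ℕ → Option ℕ
  | 0 => none
  | k+1 => Option.casesOn (selAux l k) (cond (chk k l) (some k) none) (fun x => some x)

def sel (l : List Bool) : Option ℕ := selAux l (l.length + 1)

def predictor (l : List Bool) : Bool :=
  Option.casesOn (sel l) false (fun e => decide (evalT e l.length = 1))

section Comp
open Computable

lemma chkN_eq_rec (e : ℕ) (l : List Bool) : ∀ n, chkN e l n =
    Nat.rec true (fun i ih => cond ih (decide (evalT e i = bitv (l.getD i false))) false) n := by
  intro n; induction n with
  | zero => rfl
  | succ n ih => show cond (chkN e l n) _ _ = cond _ _ _; rw [ih]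

lemma selAux_eq_rec (l : List Bool) : ∀ k, selAux l k =
    Nat.rec none (fun e ih =>
      Option.casesOn (motive := fun _ => Option ℕ) ih
        (cond (chk e l) (some e) none) (fun x => some x)) k := by
  intro k; induction k with
  | zero => rfl
  | succ k ih =>
    show (Option.casesOn (selAux l k) _ _ : Option ℕ) = Option.casesOn _ _ _
    rw [ih]

lemma chk_comp : Computable₂ chk := by
  have hbit : Computable fun p : (ℕ × List Bool) × ℕ × Bool => bitv (p.1.2.getD p.2.1 false) := by
    have hg : Primrec₂ fun (l : List Bool) (i : ℕ) => l.getD i false := Primrec.list_getD false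
    have : Primrec fun p : (ℕ × List Bool) × ℕ × Bool => bitv (p.1.2.getD p.2.1 false) :=
      Primrec.cond (hg.comp (Primrec.snd.comp .fst) (Primrec.fst.comp .snd))
        (Primrec.const 1) (Primrec.const 0)
    exact this.to_comp
  have hev : Computable fun p : (ℕ × List Bool) × ℕ × Bool => evalT p.1.1 p.2.1 :=
    evalT_computable.comp (fst.comp fst) (fst.comp snd)
  have hinner : Computable fun p : (ℕ × List Bool) × ℕ × Bool =>
      decide (evalT p.1.1 p.2.1 = bitv (p.1.2.getD p.2.1 false)) :=
    (Primrec.eq.decide.to_comp).comp hev hbit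
  have hrec := Computable.nat_rec (f := fun a : ℕ × List Bool => a.2.length)
    (g := fun _ : ℕ × List Bool => true)
    (h := fun (a : ℕ × List Bool) (q : ℕ × Bool) =>
      cond q.2 (decide (evalT a.1 q.1 = bitv (a.2.getD q.1 false))) false)
    (Primrec.list_length.to_comp.comp snd) (const true)
    (Computable.cond (snd.comp snd) hinner (const false)).to₂
  exact hrec.of_eq fun a => (chkN_eq_rec a.1 a.2 a.2.length).symm

lemma sel_comp : Computable sel := by
  open Computable in
  have hcase : Computable fun p : List Bool × ℕ × Option ℕ =>
      (Option.casesOn (motive := fun _ => Option ℕ) p.2.2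
        (cond (chk p.2.1 p.1) (some p.2.1) none) (fun x => some x)) :=
    Computable.option_casesOn (snd.comp snd)
      (Computable.cond (chk_comp.comp (fst.comp snd) fst)
        (option_some.comp (fst.comp snd)) (const none))
      (option_some.comp snd).to₂
  have hrec := Computable.nat_rec (f := fun l : List Bool => l.length + 1)
    (g := fun _ : List Bool => (none : Option ℕ))
    (h := fun (l : List Bool) (q : ℕ × Option ℕ) =>
      Option.casesOn (motive := fun _ => Option ℕ) q.2
        (cond (chk q.1 l) (some q.1) none) (fun x => some x))
    (Primrec.to_comp (Primrec.succ.comp Primrec.list_length)) (const none) hcase.to₂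
  exact hrec.of_eq fun l => (selAux_eq_rec l (l.length + 1)).symm

lemma predictor_comp : Computable predictor := by
  open Computable in
  exact Computable.option_casesOn sel_comp (const false)
    ((Primrec.eq.decide.to_comp).comp
      (evalT_computable.comp snd (Primrec.list_length.to_comp.comp fst))
      (const 1)).to₂

end Comp

/-! ## specs -/

lemma chkN_iff (e : ℕ) (l : List Bool) :
    ∀ n, chkN e l n = true ↔ ∀ i < n, evalT e i = bitv (l.getD i false) := by
  intro n
  induction n with
  | zero => simp [chkN]
  | succ n ih =>
    show (cond (chkN e l n) _ _ = true) ↔ _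
    rcases h : chkN e l n with _ | _
    · simp only [cond_false]
      constructor
      · intro hf; simp at hf
      · intro hall
        have := ih.2 fun i hi => hall i (by omega)
        simp [this] at h
    · simp only [cond_true, decide_eq_true_eq]
      constructor
      · intro heq i hi
        rcases Nat.lt_succ_iff_lt_or_eq.1 hi with hi' | rfl
        · exact (ih.1 h) i hi'
        · exact heq
      · intro hall; exact hall n (Nat.lt_succ_self n)

lemma chk_iff (e : ℕ) (l : List Bool) :
    chk e l = true ↔ ∀ i < l.length, evalT e i = bitv (l.getD i false) := chkN_iff e l _

lemma selAux_none (l : List Bool) :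
    ∀ k, selAux l k = none → ∀ e < k, chk e l = false := by
  intro k
  induction k with
  | zero => intro _ e he; omega
  | succ k ih =>
    intro h e he
    have hstep : selAux l (k+1) = (Option.casesOn (selAux l k)
        (cond (chk k l) (some k) none) (fun x => some x) : Option ℕ) := rfl
    rcases h' : selAux l k with _ | x
    · rw [hstep, h'] at h
      simp only [Option.casesOn] at h
      rcases hc : chk k l with _ | _
      · rcases Nat.lt_succ_iff_lt_or_eq.1 he with he' | rfl
        · exact ih h' e he'
        · exact hc
      · rw [hc] at h; simp at h
    · rw [hstep, h'] at h; simp at h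

lemma selAux_some (l : List Bool) :
    ∀ k e, selAux l k = some e → chk e l = true ∧ ∀ e' < e, chk e' l = false := by
  intro k
  induction k with
  | zero => intro e h; simp [selAux] at h
  | succ k ih =>
    intro e h
    have hstep : selAux l (k+1) = (Option.casesOn (selAux l k)
        (cond (chk k l) (some k) none) (fun x => some x) : Option ℕ) := rfl
    rcases h' : selAux l k with _ | x
    · rw [hstep, h'] at h
      simp only [Option.casesOn] at h
      rcases hc : chk k l with _ | _
      · rw [hc] at h; simp at h
      · rw [hc] at h
        simp only [cond_true, Option.some.injEq] at h
        subst h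
        exact ⟨hc, selAux_none l k h'⟩
    · rw [hstep, h'] at h
      simp only [Option.casesOn, Option.some.injEq] at h
      subst h
      exact ih x h'


theorem main : ∃ p : List Bool → Bool, Computable p ∧
    ∀ ω : ℕ → Bool, Primrec ω → LearnsToPredict p ω := by
  classical
  refine ⟨predictor, predictor_comp, fun ω hω => ?_⟩
  have hnat : Nat.Primrec fun n => bitv (ω n) := by
    have : Primrec fun n : ℕ => bitv (ω n) :=
      Primrec.cond hω (Primrec.const 1) (Primrec.const 0)
    exact Primrec.nat_iff.1 this
  obtain ⟨e0, he0⟩ := exists_code hnat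
  set g : ℕ → ℕ := fun e =>
    if h : ∃ i, evalT e i ≠ bitv (ω i) then Nat.find h + 1 else 0 with hg
  refine ⟨max e0 ((Finset.range e0).sup g), fun n hn => ?_⟩
  have hne0 : e0 ≤ n := le_trans (le_max_left _ _) hn
  have hnsup : (Finset.range e0).sup g ≤ n := le_trans (le_max_right _ _) hn
  set l := prefixList ω n with hl
  have hlen : l.length = n := by simp [hl, prefixList]
  have hget : ∀ i < n, l.getD i false = ω i := by
    intro i hi
    have hi' : i < l.length := by omega
    rw [List.getD_eq_getElem l false hi']
    simp [hl, prefixList]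
  have hchk_iff : ∀ e, chk e l = true ↔ ∀ i < n, evalT e i = bitv (ω i) := by
    intro e
    rw [chk_iff, hlen]
    constructor
    · intro H i hi; have := H i hi; rwa [hget i hi] at this
    · intro H i hi; rw [hget i hi]; exact H i hi
  have he0chk : chk e0 l = true := (hchk_iff e0).2 fun i _ => he0 i
  obtain ⟨estar, hsel⟩ : ∃ e, sel l = some e := by
    rcases hs : sel l with _ | e
    · have := selAux_none l (l.length + 1) hs e0 (by omega)
      rw [he0chk] at this; simp at this
    · exact ⟨e, rfl⟩
  obtain ⟨hcs, hmin⟩ := selAux_some l (l.length + 1) estar hsel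
  have hle : estar ≤ e0 := by
    by_contra hgt
    push_neg at hgt
    have := hmin e0 hgt
    rw [he0chk] at this; simp at this
  have hgood : evalT estar n = bitv (ω n) := by
    rcases eq_or_lt_of_le hle with rfl | hlt
    · exact he0 n
    · by_contra hnegoal
      have hex : ∃ i, evalT estar i ≠ bitv (ω i) := ⟨n, hnegoal⟩
      have hwit := Nat.find_spec hex
      have hbound : g estar = Nat.find hex + 1 := by rw [hg]; simp [dif_pos hex]
      have hsup : g estar ≤ (Finset.range e0).sup g :=
        Finset.le_sup (Finset.mem_range.2 hlt)
      have hfind_lt : Nat.find hex < n := by omega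
      exact hwit (((hchk_iff estar).1 hcs) (Nat.find hex) hfind_lt)
  show predictor l = ω n
  have : predictor l = decide (evalT estar l.length = 1) := by
    rw [predictor, hsel]
  rw [this, hlen, hgood]
  cases ω n <;> simp [bitv]


end S7

/-- A single computable predictor learns every primitive recursive binary
sequence. -/
theorem stmt_7 :
    ∃ p : List Bool → Bool, Computable p ∧
      ∀ ω : ℕ → Bool, Primrec ω → LearnsToPredict p ω := S7.main
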